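/- Let K and L be positive integers with L ≤ K and let T > 0. Let a_0, …, a_{L−1} be nonnegative real numbers and ψ_0, …, ψ_{L−1} arbitrary real numbers. Define the phase slopes α_l = 2πl/(KT) for l = 0, …, L−1. Then Σ_{k=0}^{K−1} |Σ_{l=0}^{L−1} a_l · exp(−i(ψ_l − α_l·k·T))|² = K · Σ_{l=0}^{L−1} a_l². In particular, the value is independent of ψ, so the infimum over all ψ ∈ ℝ^L of the left-hand side equals K·Σ_{l=0}^{L−1} a_l², i.e., the phase slopes α_l = 2πl/(KT) achieve the lower bound of Theorem 1. -/

import Mathlib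

open Complex Finset

private lemma geom_aux (K : ℕ) (hK : 0 < K) (d : ℤ) (hd0 : d ≠ 0) (hd : d.natAbs < K) :
    ∑ k ∈ Finset.range K, Complex.exp (2 * Real.pi * Complex.I * d / K) ^ k = 0 := by
  set x : ℂ := Complex.exp (2 * Real.pi * Complex.I * d / K) with hx
  have hK0 : (K : ℂ) ≠ 0 := Nat.cast_ne_zero.mpr hK.ne'
  have hpi : (2 * (Real.pi : ℂ) * Complex.I) ≠ 0 := by
    simp [Real.pi_ne_zero, Complex.I_ne_zero]
  have hx1 : x ≠ 1 := by
    intro h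
    rw [hx, Complex.exp_eq_one_iff] at h
    obtain ⟨n, hn⟩ := h
    have hdn : (d : ℂ) = (n * K : ℤ) := by
      push_cast
      field_simp at hn
      apply mul_left_cancel₀ hpi
      linear_combination (2 * (Real.pi : ℂ) * Complex.I) * hn
    have hdn' : d = n * K := Int.cast_injective hdn
    have : (K : ℤ) ∣ d := ⟨n, by linarith [hdn']⟩
    have h2 := Int.le_of_dvd (by positivity : (0:ℤ) < |d|) ((dvd_abs _ _).mpr this)
    rw [Int.abs_eq_natAbs] at h2
    omega
  have hxK : x ^ K = 1 := by
    rw [hx, ← Complex.exp_nat_mul]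
    have : (K : ℂ) * (2 * Real.pi * Complex.I * d / K) = d * (2 * Real.pi * Complex.I) := by
      field_simp
    rw [this, Complex.exp_int_mul_two_pi_mul_I]
  have := geom_sum_eq hx1 K
  rw [this, hxK, sub_self, zero_div]

/-- With phase slopes `α_l = 2πl/(KT)`, the per-port objective
`Σ_{k<K} |Σ_{l<L} a_l exp(−i(ψ_l − α_l k T))|²` equals `K Σ_l a_l²` for every
phase vector `ψ`; in particular its infimum over all `ψ ∈ ℝ^L` equals `K Σ_l a_l²`. -/
theorem stmt0 (K L : ℕ) (hK : 0 < K) (hL : 0 < L) (hLK : L ≤ K)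
    (T : ℝ) (hT : 0 < T)
    (a : Fin L → ℝ) (ha : ∀ l, 0 ≤ a l) :
    (∀ ψ : Fin L → ℝ,
      ∑ k ∈ Finset.range K,
        ‖∑ l : Fin L, (a l : ℂ) *
          Complex.exp (-Complex.I *
            ((ψ l - (2 * Real.pi * l / (K * T)) * k * T : ℝ) : ℂ))‖ ^ 2
        = K * ∑ l : Fin L, (a l) ^ 2) ∧
    sInf (Set.range (fun ψ : Fin L → ℝ =>
      ∑ k ∈ Finset.range K,
        ‖∑ l : Fin L, (a l : ℂ) *
          Complex.exp (-Complex.I *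
            ((ψ l - (2 * Real.pi * l / (K * T)) * k * T : ℝ) : ℂ))‖ ^ 2))
      = K * ∑ l : Fin L, (a l) ^ 2 := by
  have hK0 : (K : ℂ) ≠ 0 := Nat.cast_ne_zero.mpr hK.ne'
  have hT0 : (T : ℂ) ≠ 0 := by exact_mod_cast hT.ne'
  have key : ∀ ψ : Fin L → ℝ,
      ∑ k ∈ Finset.range K,
        ‖∑ l : Fin L, (a l : ℂ) *
          Complex.exp (-Complex.I *
            ((ψ l - (2 * Real.pi * l / (K * T)) * k * T : ℝ) : ℂ))‖ ^ 2
        = K * ∑ l : Fin L, (a l) ^ 2 := by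
    intro ψ
    set c : Fin L → ℂ := fun l => (a l : ℂ) * Complex.exp (-Complex.I * (ψ l : ℂ)) with hc
    set ζ : Fin L → ℂ := fun l => Complex.exp (2 * Real.pi * Complex.I * l / K) with hζ
    have hstep : ∀ k ∈ Finset.range K, ∀ l : Fin L,
        (a l : ℂ) * Complex.exp (-Complex.I *
          ((ψ l - (2 * Real.pi * l / (K * T)) * k * T : ℝ) : ℂ))
        = c l * ζ l ^ k := by
      intro k _ l
      simp only [hc, hζ]
      rw [← Complex.exp_nat_mul, mul_assoc ((a l : ℂ)), ← Complex.exp_add]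
      congr 2
      push_cast
      field_simp
      ring
    have hz : ∀ k ∈ Finset.range K,
        (∑ l : Fin L, (a l : ℂ) * Complex.exp (-Complex.I *
          ((ψ l - (2 * Real.pi * l / (K * T)) * k * T : ℝ) : ℂ)))
        = ∑ l : Fin L, c l * ζ l ^ k := fun k hk =>
      Finset.sum_congr rfl fun l _ => hstep k hk l
    have hζζ : ∀ l m : Fin L, ζ l * (starRingEnd ℂ) (ζ m)
        = Complex.exp (2 * Real.pi * Complex.I * (((l : ℤ) - (m : ℤ) : ℤ) : ℂ) / K) := by
      intro l m
      simp only [hζ, ← Complex.exp_conj, ← Complex.exp_add]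
      congr 1
      rw [map_div₀]
      simp only [map_mul, map_ofNat, Complex.conj_ofReal, Complex.conj_I, map_natCast]
      push_cast
      ring
    have hcc : ∀ l : Fin L, c l * (starRingEnd ℂ) (c l) = ((a l : ℂ)) ^ 2 := by
      intro l
      have hconj : (starRingEnd ℂ) (c l) = (a l : ℂ) * Complex.exp (Complex.I * (ψ l : ℂ)) := by
        simp only [hc, map_mul, Complex.conj_ofReal, ← Complex.exp_conj, map_neg,
          Complex.conj_I, neg_mul, neg_neg]
      have e1 : Complex.exp (-Complex.I * (ψ l : ℂ)) * Complex.exp (Complex.I * (ψ l : ℂ)) = 1 := by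
        rw [← Complex.exp_add, show -Complex.I * (ψ l : ℂ) + Complex.I * (ψ l : ℂ) = 0 by ring,
          Complex.exp_zero]
      rw [hconj]
      simp only [hc]
      linear_combination ((a l : ℂ))^2 * e1
    have habs : ∀ k ∈ Finset.range K,
        ((‖∑ l : Fin L, (a l : ℂ) * Complex.exp (-Complex.I *
            ((ψ l - (2 * Real.pi * l / (K * T)) * k * T : ℝ) : ℂ))‖ ^ 2 : ℝ) : ℂ)
        = (∑ l : Fin L, c l * ζ l ^ k) *
            (starRingEnd ℂ) (∑ l : Fin L, c l * ζ l ^ k) := by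
      intro k hk
      rw [Complex.sq_norm, hz k hk]
      exact (Complex.mul_conj _).symm
    apply Complex.ofReal_injective
    calc ((∑ k ∈ Finset.range K,
          ‖∑ l : Fin L, (a l : ℂ) * Complex.exp (-Complex.I *
            ((ψ l - (2 * Real.pi * l / (K * T)) * k * T : ℝ) : ℂ))‖ ^ 2 : ℝ) : ℂ)
        = ∑ k ∈ Finset.range K, ((‖∑ l : Fin L, (a l : ℂ) *
            Complex.exp (-Complex.I *
            ((ψ l - (2 * Real.pi * l / (K * T)) * k * T : ℝ) : ℂ))‖ ^ 2 : ℝ) : ℂ) := by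
          push_cast; rfl
      _ = ∑ k ∈ Finset.range K, (∑ l : Fin L, c l * ζ l ^ k) *
            (starRingEnd ℂ) (∑ l : Fin L, c l * ζ l ^ k) :=
          Finset.sum_congr rfl habs
      _ = ∑ k ∈ Finset.range K, ∑ l : Fin L, ∑ m : Fin L,
            (c l * (starRingEnd ℂ) (c m)) * (ζ l * (starRingEnd ℂ) (ζ m)) ^ k := by
          refine Finset.sum_congr rfl fun k _ => ?_
          rw [map_sum, Finset.sum_mul_sum]
          refine Finset.sum_congr rfl fun l _ => Finset.sum_congr rfl fun m _ => ?_
          rw [map_mul, map_pow, mul_pow]; ring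
      _ = ∑ l : Fin L, ∑ m : Fin L, ∑ k ∈ Finset.range K,
            (c l * (starRingEnd ℂ) (c m)) * (ζ l * (starRingEnd ℂ) (ζ m)) ^ k := by
          rw [Finset.sum_comm]
          exact Finset.sum_congr rfl fun l _ => Finset.sum_comm
      _ = ∑ l : Fin L, ∑ m : Fin L, (c l * (starRingEnd ℂ) (c m)) *
            ∑ k ∈ Finset.range K, (ζ l * (starRingEnd ℂ) (ζ m)) ^ k :=
          Finset.sum_congr rfl fun l _ => Finset.sum_congr rfl fun m _ =>
            (Finset.mul_sum _ _ _).symm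
      _ = ∑ l : Fin L, ((a l : ℂ)) ^ 2 * K := by
          refine Finset.sum_congr rfl fun l _ => ?_
          rw [Finset.sum_eq_single_of_mem l (Finset.mem_univ l)]
          · rw [hcc l, hζζ l l]
            simp
          · intro m _ hml
            rw [hζζ l m, geom_aux K hK _ ?_ ?_]
            · ring
            · rw [sub_ne_zero]
              exact_mod_cast fun h => hml (Fin.val_injective (by exact_mod_cast h)).symm
            · have h1 : (l : ℕ) < L := l.isLt
              have h2 : (m : ℕ) < L := m.isLt
              omega
      _ = ((K * ∑ l : Fin L, (a l) ^ 2 : ℝ) : ℂ) := by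
          push_cast
          rw [Finset.mul_sum]
          exact Finset.sum_congr rfl fun l _ => by ring
  refine ⟨key, ?_⟩
  have hrange : Set.range (fun ψ : Fin L → ℝ =>
      ∑ k ∈ Finset.range K,
        ‖∑ l : Fin L, (a l : ℂ) *
          Complex.exp (-Complex.I *
            ((ψ l - (2 * Real.pi * l / (K * T)) * k * T : ℝ) : ℂ))‖ ^ 2)
      = {(K : ℝ) * ∑ l : Fin L, (a l) ^ 2} := by
    ext x
    simp only [Set.mem_range, Set.mem_singleton_iff]
    constructor
    · rintro ⟨ψ, rfl⟩; exact key ψ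
    · rintro rfl; exact ⟨fun _ => 0, key _⟩
  rw [hrange, csInf_singleton]
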